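/- Let μ = i₁i₂⋯i_r and ν = j₁j₂⋯j_s with r, s ≥ 1, where i₁ ≥ i₂ ≥ ⋯ ≥ i_r and j₁ ≥ j₂ ≥ ⋯ ≥ j_s are Lyndon words. Suppose i₁ ≥ j₁, that the first letters of i₁ and j₁ are equal (call this letter a), and that every letter of i₁ other than its first is strictly greater than a (i.e., a occurs exactly once in i₁). Then the lexicographically greatest shuffle w of μ and ν satisfies: either w = i₁ ⬝ w′ for some shuffle w′ of i₂⋯i_r and ν, or i₁ = j₁ and w = j₁ ⬝ w″ for some shuffle w″ of μ and j₂⋯j_s. In particular, if i₁ > j₁ then the first alternative holds. -/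

import Mathlib

/-- `IsShuffle μ ν w` means that `w` is an interleaving (shuffle) of the words `μ` and `ν`. -/
inductive IsShuffle {α : Type*} : List α → List α → List α → Prop
  | nil : IsShuffle [] [] []
  | left {a : α} {μ ν w : List α} : IsShuffle μ ν w → IsShuffle (a :: μ) ν (a :: w)
  | right {a : α} {μ ν w : List α} : IsShuffle μ ν w → IsShuffle μ (a :: ν) (a :: w)

/-- A nonempty word `u` is a Lyndon word if it is lexicographically strictly smaller than
every proper nonempty suffix of itself. -/
def IsLyndon {α : Type*} [LinearOrder α] (u : List α) : Prop :=
  u ≠ [] ∧ ∀ v : List α, v ≠ [] → v ≠ u → v <:+ u → u < v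

section Helpers

variable {α : Type*} [LinearOrder α]

lemma lex_lt_of_head_lt {x y : α} {p q : List α} (h : x < y) : x :: p < y :: q :=
  List.Lex.rel h

lemma head_le_of_cons_le {x y : α} {p q : List α} (h : x :: p ≤ y :: q) : x ≤ y := by
  rcases lt_or_eq_of_le h with h | h
  · exact List.head_le_of_lt h
  · injection h with h1 _; exact le_of_eq h1

lemma tail_le_of_cons_le {x : α} {p q : List α} (h : x :: p ≤ x :: q) : p ≤ q := by
  by_contra hc
  exact lt_irrefl _ (lt_of_le_of_lt h (List.Lex.cons (lt_of_not_ge hc)))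

lemma eq_nil_of_le_nil {p : List α} (h : p ≤ []) : p = [] :=
  le_antisymm h (by cases p with | nil => exact le_rfl | cons x q => exact le_of_lt List.Lex.nil)

omit [LinearOrder α] in
theorem shuffle_nil_left : ∀ {B : List α}, IsShuffle [] B B
  | [] => .nil
  | _ :: _ => .right shuffle_nil_left

omit [LinearOrder α] in
theorem shuffle_nil_right : ∀ {A : List α}, IsShuffle A [] A
  | [] => .nil
  | _ :: _ => .left shuffle_nil_right

omit [LinearOrder α] in
theorem shuffle_append_left : ∀ (p : List α) {A B w : List α},
    IsShuffle A B w → IsShuffle (p ++ A) B (p ++ w)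
  | [], _, _, _, h => h
  | _ :: p, _, _, _, h => .left (shuffle_append_left p h)

omit [LinearOrder α] in
theorem shuffle_append_right : ∀ (p : List α) {A B w : List α},
    IsShuffle A B w → IsShuffle A (p ++ B) (p ++ w)
  | [], _, _, _, h => h
  | _ :: p, _, _, _, h => .right (shuffle_append_right p h)

/-- The lexicographically greatest shuffle of two words. -/
def maxShuffle : List α → List α → List α
  | [], B => B
  | a :: A, [] => a :: A
  | a :: A, b :: B => max (a :: maxShuffle A (b :: B)) (b :: maxShuffle (a :: A) B)
  termination_by A B => A.length + B.length
  decreasing_by all_goals simp +arith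

@[simp] lemma maxShuffle_nil_left (B : List α) : maxShuffle [] B = B := by
  cases B <;> simp [maxShuffle]

@[simp] lemma maxShuffle_nil_right (A : List α) : maxShuffle A [] = A := by
  cases A <;> simp [maxShuffle]

theorem isShuffle_maxShuffle : ∀ (A B : List α), IsShuffle A B (maxShuffle A B)
  | [], B => by simpa using shuffle_nil_left
  | a :: A, [] => by simpa using shuffle_nil_right
  | a :: A, b :: B => by
    rw [maxShuffle]
    rcases max_choice (a :: maxShuffle A (b :: B)) (b :: maxShuffle (a :: A) B) with h | h <;>
      rw [h]
    · exact .left (isShuffle_maxShuffle A (b :: B))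
    · exact .right (isShuffle_maxShuffle (a :: A) B)
  termination_by A B => A.length + B.length
  decreasing_by all_goals simp +arith

theorem le_maxShuffle {A B v : List α} (h : IsShuffle A B v) : v ≤ maxShuffle A B := by
  induction h with
  | nil => simp
  | @left a μ ν w _ ih =>
    cases ν with
    | nil =>
      simp only [maxShuffle_nil_right] at ih ⊢
      exact List.cons_le_cons a ih
    | cons b B =>
      rw [maxShuffle]
      exact le_trans (List.cons_le_cons a ih) (le_max_left _ _)
  | @right b μ ν w _ ih =>
    cases μ with
    | nil =>
      simp only [maxShuffle_nil_left] at ih ⊢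
      exact List.cons_le_cons b ih
    | cons a A =>
      rw [maxShuffle]
      exact le_trans (List.cons_le_cons b ih) (le_max_right _ _)

/-- Claim A: any shuffle of `t ++ M` with `a :: ρ`, where all letters of `t` exceed `a`,
is at most `t ++ m` where `m` bounds all shuffles of `M` with `a :: ρ`. -/
lemma claimA (a : α) (ρ M m : List α)
    (hm : ∀ z, IsShuffle M (a :: ρ) z → z ≤ m) :
    ∀ (t v : List α), (∀ b ∈ t, a < b) → IsShuffle (t ++ M) (a :: ρ) v → v ≤ t ++ m := by
  intro t
  induction t with
  | nil => intro v _ hv; exact hm v hv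
  | cons d t' ih =>
    intro v hgt hv
    have had : a < d := hgt d (by simp)
    rw [List.cons_append] at hv
    cases hv with
    | left h => exact List.cons_le_cons d (ih _ (fun b hb => hgt b (by simp [hb])) h)
    | right h => exact le_of_lt (lex_lt_of_head_lt had)

/-- Claim E: any shuffle of `a :: r` with `s ++ N` — where all letters of `u` exceed `a`,
`s ≤ u`, and every head of `N` is `≤ a` — is at most `u ++ m` (for any `m`), or else
`s = u` and it is at most `s ++ y`, where `y` bounds all shuffles of `a :: r` with `N`. -/
lemma claimE (a : α) (r N m y : List α)
    (hN : ∀ (c : α) (N' : List α), N = c :: N' → c ≤ a)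
    (hy : ∀ z, IsShuffle (a :: r) N z → z ≤ y) :
    ∀ (s u v : List α), (∀ b ∈ u, a < b) → s ≤ u → IsShuffle (a :: r) (s ++ N) v →
      v ≤ u ++ m ∨ (s = u ∧ v ≤ s ++ y) := by
  intro s
  induction s with
  | nil =>
    intro u v hgt hsu hv
    cases u with
    | nil => exact Or.inr ⟨rfl, by simpa using hy v (by simpa using hv)⟩
    | cons d u' =>
      have had : a < d := hgt d (by simp)
      rw [List.nil_append] at hv
      left
      cases hv with
      | left h => exact le_of_lt (lex_lt_of_head_lt had)
      | @right c _ ν' _ h =>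
        have hca : c ≤ a := hN c ν' rfl
        exact le_of_lt (lex_lt_of_head_lt (lt_of_le_of_lt hca had))
  | cons c s' ih =>
    intro u v hgt hsu hv
    cases u with
    | nil => exact absurd (eq_nil_of_le_nil hsu) (by simp)
    | cons d u' =>
      have had : a < d := hgt d (by simp)
      rcases lt_trichotomy c d with hcd | hcd | hcd
      · left
        rw [List.cons_append] at hv
        cases hv with
        | left h => exact le_of_lt (lex_lt_of_head_lt had)
        | right h => exact le_of_lt (lex_lt_of_head_lt hcd)
      · subst hcd
        rw [List.cons_append] at hv
        cases hv with
        | left h => exact Or.inl (le_of_lt (lex_lt_of_head_lt had))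
        | right h =>
          have hs'u' : s' ≤ u' := tail_le_of_cons_le hsu
          rcases ih u' _ (fun b hb => hgt b (by simp [hb])) hs'u' h with h1 | ⟨h2, h3⟩
          · exact Or.inl (List.cons_le_cons c h1)
          · exact Or.inr ⟨by rw [h2], List.cons_le_cons c h3⟩
      · exact absurd (head_le_of_cons_le hsu) (not_le_of_gt hcd)

end Helpers

/-- with `i₁ ≥ j₁`, equal first letters `a`, and `a` occurring exactly once in
`i₁` (equivalently, every letter of `i₁` other than its first is strictly greater than `a`),
the lexicographically greatest shuffle `w` of `μ = i₁ ⋯ i_r` and `ν = j₁ ⋯ j_s` is of the form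
`i₁ ++ (shuffle of i₂ ⋯ i_r and ν)`, or `i₁ = j₁` and `w = j₁ ++ (shuffle of μ and j₂ ⋯ j_s)`.
In particular, if `i₁ > j₁` then the first alternative holds. -/
theorem stmt1 {α : Type*} [LinearOrder α]
    (i₁ : List α) (itl : List (List α)) (j₁ : List α) (jtl : List (List α))
    (hLI : ∀ u ∈ i₁ :: itl, IsLyndon u)
    (hLJ : ∀ u ∈ j₁ :: jtl, IsLyndon u)
    (hdecI : List.Chain' (fun u v : List α => v ≤ u) (i₁ :: itl))
    (hdecJ : List.Chain' (fun u v : List α => v ≤ u) (j₁ :: jtl))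
    (hi : i₁ ≠ []) (hj : j₁ ≠ [])
    (hij : j₁ ≤ i₁)
    (hhead : i₁.head hi = j₁.head hj)
    (hcount : List.count (i₁.head hi) i₁ = 1)
    (w : List α)
    (hshuf : IsShuffle ((i₁ :: itl).flatten) ((j₁ :: jtl).flatten) w)
    (hgreatest : ∀ w', IsShuffle ((i₁ :: itl).flatten) ((j₁ :: jtl).flatten) w' → w' ≤ w) :
    ((∃ w', IsShuffle itl.flatten ((j₁ :: jtl).flatten) w' ∧ w = i₁ ++ w') ∨
      (i₁ = j₁ ∧ ∃ w'', IsShuffle ((i₁ :: itl).flatten) jtl.flatten w'' ∧ w = j₁ ++ w'')) ∧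
    (j₁ < i₁ → ∃ w', IsShuffle itl.flatten ((j₁ :: jtl).flatten) w' ∧ w = i₁ ++ w') := by
  obtain ⟨a, t, rfl⟩ : ∃ a t, i₁ = a :: t := by
    cases i₁ with
    | nil => exact absurd rfl hi
    | cons a t => exact ⟨a, t, rfl⟩
  simp only [List.head_cons] at hhead hcount
  obtain ⟨s, rfl⟩ : ∃ s, j₁ = a :: s := by
    refine ⟨j₁.tail, ?_⟩
    rw [hhead]
    exact (List.cons_head_tail hj).symm
  -- basic facts
  have hat : a ∉ t := by
    have h0 : List.count a t = 0 := by
      have := hcount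
      rw [List.count_cons_self] at this
      omega
    exact (List.count_eq_zero).mp h0
  have hLi : IsLyndon (a :: t) := hLI _ (by simp)
  have hgtT : ∀ b ∈ t, a < b := by
    intro b hb
    obtain ⟨p, q, ht⟩ := List.append_of_mem hb
    subst ht
    have hsuf : (b :: q) <:+ (a :: (p ++ b :: q)) := ⟨a :: p, rfl⟩
    have hne2 : (b :: q) ≠ a :: (p ++ b :: q) := by
      intro h
      apply_fun List.length at h
      simp at h
      omega
    have hlt := hLi.2 (b :: q) (by simp) hne2 hsuf
    have hab : a ≤ b := List.head_le_of_lt hlt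
    refine lt_of_le_of_ne hab fun he => ?_
    exact hat (he ▸ hb)
  have hst : s ≤ t := tail_le_of_cons_le hij
  have hN : ∀ (c : α) (N' : List α), jtl.flatten = c :: N' → c ≤ a := by
    intro c N' hcN
    cases jtl with
    | nil => simp at hcN
    | cons j₂ rest =>
      have hj2 : IsLyndon j₂ := hLJ _ (by simp)
      obtain ⟨e, j₂', rfl⟩ : ∃ e j₂', j₂ = e :: j₂' := by
        cases j₂ with
        | nil => exact absurd rfl hj2.1
        | cons e j₂' => exact ⟨e, j₂', rfl⟩
      have hle : (e :: j₂' : List α) ≤ a :: s := (List.isChain_cons_cons.mp hdecJ).1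
      rw [List.flatten_cons, List.cons_append] at hcN
      injection hcN with h1 _
      rw [← h1]
      exact head_le_of_cons_le hle
  have hflatI : ((a :: t) :: itl).flatten = a :: (t ++ itl.flatten) := by
    rw [List.flatten_cons, List.cons_append]
  have hflatJ : ((a :: s) :: jtl).flatten = a :: (s ++ jtl.flatten) := by
    rw [List.flatten_cons, List.cons_append]
  rw [hflatI, hflatJ] at hshuf hgreatest
  -- the two maximal candidates
  set M := itl.flatten with hM
  set N := jtl.flatten with hN0
  set m := maxShuffle M (a :: (s ++ N)) with hmdef
  have hmS : IsShuffle M (a :: (s ++ N)) m := isShuffle_maxShuffle _ _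
  have hm : ∀ z, IsShuffle M (a :: (s ++ N)) z → z ≤ m := fun z hz => le_maxShuffle hz
  set y := maxShuffle (a :: (t ++ M)) N with hydef
  have hyS : IsShuffle (a :: (t ++ M)) N y := isShuffle_maxShuffle _ _
  have hy : ∀ z, IsShuffle (a :: (t ++ M)) N z → z ≤ y := fun z hz => le_maxShuffle hz
  have hXshuf : IsShuffle (a :: (t ++ M)) (a :: (s ++ N)) (a :: (t ++ m)) :=
    .left (shuffle_append_left t hmS)
  have hYshuf : IsShuffle (a :: (t ++ M)) (a :: (s ++ N)) (a :: (s ++ y)) :=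
    .right (shuffle_append_right s hyS)
  have hmS' : IsShuffle itl.flatten (((a :: s) :: jtl).flatten) m := by
    rw [hflatJ]; exact hmS
  have branch1 : ∀ w₁ : List α, w = a :: w₁ → w₁ = t ++ m →
      (∃ w', IsShuffle itl.flatten (((a :: s) :: jtl).flatten) w' ∧ w = (a :: t) ++ w') := by
    intro w₁ hw hw₁
    exact ⟨m, hmS', by rw [hw, hw₁]; rfl⟩
  cases hshuf with
  | @left _ _ _ w₁ h1 =>
    have hle1 : w₁ ≤ t ++ m := claimA a (s ++ N) M m hm t w₁ hgtT h1
    have hge1 : t ++ m ≤ w₁ := tail_le_of_cons_le (hgreatest _ hXshuf)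
    have hw₁ : w₁ = t ++ m := le_antisymm hle1 hge1
    obtain hb1 := branch1 w₁ rfl hw₁
    exact ⟨Or.inl hb1, fun _ => hb1⟩
  | @right _ _ _ w₁ h1 =>
    rcases claimE a (t ++ M) N m y hN hy s t w₁ hgtT hst h1 with hc | ⟨hseqt, hc⟩
    · have hge1 : t ++ m ≤ w₁ := tail_le_of_cons_le (hgreatest _ hXshuf)
      have hw₁ : w₁ = t ++ m := le_antisymm hc hge1
      obtain hb1 := branch1 w₁ rfl hw₁
      exact ⟨Or.inl hb1, fun _ => hb1⟩
    · have hge1 : s ++ y ≤ w₁ := tail_le_of_cons_le (hgreatest _ hYshuf)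
      have hw₁ : w₁ = s ++ y := le_antisymm hc hge1
      have heq : (a :: t : List α) = a :: s := by rw [hseqt]
      have hyS' : IsShuffle (((a :: t) :: itl).flatten) jtl.flatten y := by
        rw [hflatI]; exact hyS
      refine ⟨Or.inr ⟨heq.symm ▸ rfl, ⟨y, hyS', by rw [hw₁]; rfl⟩⟩, fun hlt => ?_⟩
      rw [heq] at hlt
      exact absurd hlt (lt_irrefl _)
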